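/- Let C₁ and C₂ be sets of PA*01 expressions. Then C₁‖C₂ is a strongly connected component if and only if both C₁ and C₂ are strongly connected components. Moreover, C₁‖C₂ is non-trivial if and only if at least one of C₁ and C₂ is non-trivial. -/
import Mathlib


/-- PA*01 expressions over an action set `Act`. -/
inductive PExpr (Act : Type) : Type
  | dl : PExpr Act
  | emp : PExpr Act
  | act : Act → PExpr Act
  | seq : PExpr Act → PExpr Act → PExpr Act
  | alt : PExpr Act → PExpr Act → PExpr Act
  | star : PExpr Act → PExpr Act
  | par : PExpr Act → PExpr Act → PExpr Act

variable {Act : Type}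

/-- The termination predicate `↓` of PA*01. -/
inductive PTerm : PExpr Act → Prop
  | emp : PTerm PExpr.emp
  | altl {p q : PExpr Act} : PTerm p → PTerm (PExpr.alt p q)
  | altr {p q : PExpr Act} : PTerm q → PTerm (PExpr.alt p q)
  | seq {p q : PExpr Act} : PTerm p → PTerm q → PTerm (PExpr.seq p q)
  | star {p : PExpr Act} : PTerm (PExpr.star p)
  | par {p q : PExpr Act} : PTerm p → PTerm q → PTerm (PExpr.par p q)

/-- The transition relation `p →a p'` of PA*01 (pure interleaving). -/
inductive PStep : PExpr Act → Act → PExpr Act → Prop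
  | act {a : Act} : PStep (PExpr.act a) a PExpr.emp
  | altl {p q p' : PExpr Act} {a : Act} : PStep p a p' → PStep (PExpr.alt p q) a p'
  | altr {p q q' : PExpr Act} {a : Act} : PStep q a q' → PStep (PExpr.alt p q) a q'
  | seql {p q p' : PExpr Act} {a : Act} :
      PStep p a p' → PStep (PExpr.seq p q) a (PExpr.seq p' q)
  | seqr {p q q' : PExpr Act} {a : Act} :
      PTerm p → PStep q a q' → PStep (PExpr.seq p q) a q'
  | star {p p' : PExpr Act} {a : Act} :
      PStep p a p' → PStep (PExpr.star p) a (PExpr.seq p' (PExpr.star p))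
  | parl {p q p' : PExpr Act} {a : Act} :
      PStep p a p' → PStep (PExpr.par p q) a (PExpr.par p' q)
  | parr {p q q' : PExpr Act} {a : Act} :
      PStep q a q' → PStep (PExpr.par p q) a (PExpr.par p q')

/-- `p → p'`: a transition with some label. -/
def PStepAny (p q : PExpr Act) : Prop := ∃ a, PStep p a q

/-- `p →* p'`: reachability. -/
def PReach (p q : PExpr Act) : Prop := Relation.ReflTransGen PStepAny p q

/-- `p` is normed: some terminating expression is reachable from `p`. -/
def PNormed (p : PExpr Act) : Prop := ∃ q, PReach p q ∧ PTerm q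

/-- A strongly connected component: a maximal set of mutually reachable states. -/
def IsSCC (C : Set (PExpr Act)) : Prop :=
  (∀ s ∈ C, ∀ t ∈ C, PReach s t) ∧
    ∀ D : Set (PExpr Act), C ⊆ D → (∀ s ∈ D, ∀ t ∈ D, PReach s t) → D = C

/-- A trivial SCC: a singleton `{s}` with no transition `s → s`. -/
def IsTrivialSCC (C : Set (PExpr Act)) : Prop := ∃ s, C = {s} ∧ ¬ PStepAny s s

/-- `C · q = { p · q | p ∈ C }`. -/
def seqSet (C : Set (PExpr Act)) (q : PExpr Act) : Set (PExpr Act) :=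
  (fun p => PExpr.seq p q) '' C

/-- `C₁ ‖ C₂ = { p ‖ q | p ∈ C₁, q ∈ C₂ }`. -/
def parSet (C₁ C₂ : Set (PExpr Act)) : Set (PExpr Act) :=
  Set.image2 PExpr.par C₁ C₂

/-- A basic SCC: `C = C' · q*` for some set `C'` that is not an SCC. -/
def IsBasic (C : Set (PExpr Act)) : Prop :=
  ∃ (C' : Set (PExpr Act)) (q : PExpr Act), C = seqSet C' (PExpr.star q) ∧ ¬ IsSCC C'

/-- The set `Extⁿ(s)` of normed exit transitions from `s`, w.r.t. the SCC `C`. -/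
def ExtN (C : Set (PExpr Act)) (s : PExpr Act) : Set (Act × PExpr Act) :=
  {e | PStep s e.1 e.2 ∧ e.2 ∉ C ∧ PNormed e.2}

/-- `s ∈ C` is an alive exit state if `s↓` or `s` has a normed exit transition. -/
def AliveExit (C : Set (PExpr Act)) (s : PExpr Act) : Prop :=
  s ∈ C ∧ (PTerm s ∨ ∃ e, e ∈ ExtN C s)

/-- `E · q = { (a, r · q) | (a, r) ∈ E }`. -/
def extSeq (E : Set (Act × PExpr Act)) (q : PExpr Act) : Set (Act × PExpr Act) :=
  (fun e => (e.1, PExpr.seq e.2 q)) '' E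

/-- `E ‖ q = { (a, r ‖ q) | (a, r) ∈ E }`. -/
def extParL (E : Set (Act × PExpr Act)) (q : PExpr Act) : Set (Act × PExpr Act) :=
  (fun e => (e.1, PExpr.par e.2 q)) '' E

/-- `p ‖ E = { (a, p ‖ r) | (a, r) ∈ E }`. -/
def extParR (p : PExpr Act) (E : Set (Act × PExpr Act)) : Set (Act × PExpr Act) :=
  (fun e => (e.1, PExpr.par p e.2)) '' E

/-- `s` and `s'` belong to the same strongly connected component. -/
def SameSCC (s s' : PExpr Act) : Prop := ∃ C : Set (PExpr Act), IsSCC C ∧ s ∈ C ∧ s' ∈ C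

/-- The equivalence `∼` on exit transitions: same action, targets in the same SCC. -/
def ExitEquiv (e e' : Act × PExpr Act) : Prop := e.1 = e'.1 ∧ SameSCC e.2 e'.2

/-- Is the expression a star expression? -/
def isStarP : PExpr Act → Bool
  | PExpr.star _ => true
  | _ => false

/-- The measure `OC` on PA*01 expressions. -/
def OC : PExpr Act → ℕ
  | PExpr.dl => 0
  | PExpr.emp => 0
  | PExpr.act _ => 1
  | PExpr.seq _ q => if isStarP q then 0 else OC q + 1
  | PExpr.alt p q => max (OC p) (OC q) + 1
  | PExpr.star _ => 1
  | PExpr.par _ _ => 0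

/-- A PA*01 expression without occurrences of `‖` is a BPA*01 expression. -/
def NoPar : PExpr Act → Prop
  | PExpr.dl => True
  | PExpr.emp => True
  | PExpr.act _ => True
  | PExpr.seq p q => NoPar p ∧ NoPar q
  | PExpr.alt p q => NoPar p ∧ NoPar q
  | PExpr.star p => NoPar p
  | PExpr.par _ _ => False

/-- Bisimulations on PA*01 expressions. -/
def IsBisimulation (R : PExpr Act → PExpr Act → Prop) : Prop :=
  ∀ p q, R p q →
    (∀ a p', PStep p a p' → ∃ q', PStep q a q' ∧ R p' q') ∧
    (∀ a q', PStep q a q' → ∃ p', PStep p a p' ∧ R p' q') ∧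
    (PTerm p ↔ PTerm q)

/-- Bisimilarity of PA*01 expressions. -/
def Bisimilar (p q : PExpr Act) : Prop :=
  ∃ R : PExpr Act → PExpr Act → Prop, IsBisimulation R ∧ R p q

lemma step_par_inv {p q t : PExpr Act} {a : Act} (h : PStep (PExpr.par p q) a t) :
    (∃ p', PStep p a p' ∧ t = PExpr.par p' q) ∨ (∃ q', PStep q a q' ∧ t = PExpr.par p q') := by
  cases h with
  | parl h => exact Or.inl ⟨_, h, rfl⟩
  | parr h => exact Or.inr ⟨_, h, rfl⟩

lemma reach_par_inv {p q t : PExpr Act} (h : PReach (PExpr.par p q) t) :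
    ∃ p' q', t = PExpr.par p' q' ∧ PReach p p' ∧ PReach q q' := by
  induction h with
  | refl => exact ⟨p, q, rfl, .refl, .refl⟩
  | tail h₁ h₂ ih =>
    obtain ⟨p', q', rfl, hp, hq⟩ := ih
    obtain ⟨a, h₂⟩ := h₂
    rcases step_par_inv h₂ with ⟨p'', hs, rfl⟩ | ⟨q'', hs, rfl⟩
    · exact ⟨p'', q', rfl, hp.tail ⟨a, hs⟩, hq⟩
    · exact ⟨p', q'', rfl, hp, hq.tail ⟨a, hs⟩⟩

lemma reach_parl {p p' : PExpr Act} (q : PExpr Act) (h : PReach p p') :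
    PReach (PExpr.par p q) (PExpr.par p' q) := by
  induction h with
  | refl => exact .refl
  | tail _ h₂ ih => obtain ⟨a, h₂⟩ := h₂; exact ih.tail ⟨a, .parl h₂⟩

lemma reach_parr (p : PExpr Act) {q q' : PExpr Act} (h : PReach q q') :
    PReach (PExpr.par p q) (PExpr.par p q') := by
  induction h with
  | refl => exact .refl
  | tail _ h₂ ih => obtain ⟨a, h₂⟩ := h₂; exact ih.tail ⟨a, .parr h₂⟩

lemma reach_par {p p' q q' : PExpr Act} (hp : PReach p p') (hq : PReach q q') :
    PReach (PExpr.par p q) (PExpr.par p' q') :=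
  (reach_parl q hp).trans (reach_parr p' hq)

lemma scc_nonempty {C : Set (PExpr Act)} (h : IsSCC C) : C.Nonempty := by
  by_contra hne
  rw [Set.not_nonempty_iff_eq_empty] at hne
  subst hne
  have := h.2 {PExpr.dl} (Set.empty_subset _)
    (by rintro s rfl t rfl; exact Relation.ReflTransGen.refl)
  exact (Set.singleton_ne_empty _) this

lemma scc_mem {C : Set (PExpr Act)} (h : IsSCC C) {s t : PExpr Act} (hs : s ∈ C)
    (h1 : PReach s t) (h2 : PReach t s) : t ∈ C := by
  have hD : ∀ x ∈ C ∪ {t}, ∀ y ∈ C ∪ {t}, PReach x y := by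
    rintro x (hx | rfl) y (hy | rfl)
    · exact h.1 x hx y hy
    · exact (h.1 x hx s hs).trans h1
    · exact h2.trans (h.1 s hs y hy)
    · exact Relation.ReflTransGen.refl
  have := h.2 (C ∪ {t}) Set.subset_union_left hD
  rw [← this]; exact Or.inr rfl

/-- `C₁ ‖ C₂` is an SCC iff both `C₁` and `C₂` are SCCs; moreover
(for SCCs `C₁` and `C₂`), `C₁ ‖ C₂` is non-trivial iff at least one of `C₁`
and `C₂` is non-trivial. -/
theorem par_scc {Act : Type} [Nonempty Act] (C₁ C₂ : Set (PExpr Act)) :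
    (IsSCC (parSet C₁ C₂) ↔ IsSCC C₁ ∧ IsSCC C₂) ∧
    (IsSCC C₁ → IsSCC C₂ →
      (¬ IsTrivialSCC (parSet C₁ C₂) ↔ ¬ IsTrivialSCC C₁ ∨ ¬ IsTrivialSCC C₂)) := by
  constructor
  · constructor
    · intro h
      obtain ⟨s, hs⟩ := scc_nonempty h
      obtain ⟨p₀, hp₀, q₀, hq₀, rfl⟩ := Set.mem_image2.mp hs
      -- mutual reachability in C₁
      have hm1 : ∀ p ∈ C₁, ∀ p' ∈ C₁, PReach p p' := by
        intro p hp p' hp'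
        have := h.1 (PExpr.par p q₀) (Set.mem_image2_of_mem hp hq₀)
          (PExpr.par p' q₀) (Set.mem_image2_of_mem hp' hq₀)
        obtain ⟨p'', q'', heq, hr, _⟩ := reach_par_inv this
        obtain ⟨h1, h2⟩ := PExpr.par.inj heq.symm
        rwa [← h1]
      have hm2 : ∀ q ∈ C₂, ∀ q' ∈ C₂, PReach q q' := by
        intro q hq q' hq'
        have := h.1 (PExpr.par p₀ q) (Set.mem_image2_of_mem hp₀ hq)
          (PExpr.par p₀ q') (Set.mem_image2_of_mem hp₀ hq')
        obtain ⟨p'', q'', heq, _, hr⟩ := reach_par_inv this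
        obtain ⟨h1, h2⟩ := PExpr.par.inj heq.symm
        rwa [← h2]
      refine ⟨⟨hm1, ?_⟩, ⟨hm2, ?_⟩⟩
      · intro D hCD hD
        have hsub : parSet C₁ C₂ ⊆ parSet D C₂ :=
          Set.image2_subset hCD (le_refl C₂)
        have hDm : ∀ x ∈ parSet D C₂, ∀ y ∈ parSet D C₂, PReach x y := by
          rintro x hx y hy
          obtain ⟨p, hp, q, hq, rfl⟩ := Set.mem_image2.mp hx
          obtain ⟨p', hp', q', hq', rfl⟩ := Set.mem_image2.mp hy
          exact reach_par (hD p hp p' hp') (hm2 q hq q' hq')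
        have heq := h.2 (parSet D C₂) hsub hDm
        apply Set.Subset.antisymm _ hCD
        intro d hd
        have : PExpr.par d q₀ ∈ parSet C₁ C₂ := by
          rw [← heq]; exact Set.mem_image2_of_mem hd hq₀
        obtain ⟨p, hp, q, hq, heq2⟩ := Set.mem_image2.mp this
        obtain ⟨h1, _⟩ := PExpr.par.inj heq2
        rwa [h1] at hp
      · intro D hCD hD
        have hsub : parSet C₁ C₂ ⊆ parSet C₁ D :=
          Set.image2_subset (le_refl C₁) hCD
        have hDm : ∀ x ∈ parSet C₁ D, ∀ y ∈ parSet C₁ D, PReach x y := by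
          rintro x hx y hy
          obtain ⟨p, hp, q, hq, rfl⟩ := Set.mem_image2.mp hx
          obtain ⟨p', hp', q', hq', rfl⟩ := Set.mem_image2.mp hy
          exact reach_par (hm1 p hp p' hp') (hD q hq q' hq')
        have heq := h.2 (parSet C₁ D) hsub hDm
        apply Set.Subset.antisymm _ hCD
        intro d hd
        have : PExpr.par p₀ d ∈ parSet C₁ C₂ := by
          rw [← heq]; exact Set.mem_image2_of_mem hp₀ hd
        obtain ⟨p, hp, q, hq, heq2⟩ := Set.mem_image2.mp this
        obtain ⟨_, h2⟩ := PExpr.par.inj heq2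
        rwa [h2] at hq
    · rintro ⟨h1, h2⟩
      obtain ⟨p₀, hp₀⟩ := scc_nonempty h1
      obtain ⟨q₀, hq₀⟩ := scc_nonempty h2
      constructor
      · rintro x hx y hy
        obtain ⟨p, hp, q, hq, rfl⟩ := Set.mem_image2.mp hx
        obtain ⟨p', hp', q', hq', rfl⟩ := Set.mem_image2.mp hy
        exact reach_par (h1.1 p hp p' hp') (h2.1 q hq q' hq')
      · intro D hCD hD
        apply Set.Subset.antisymm _ hCD
        intro t ht
        have hs0 : PExpr.par p₀ q₀ ∈ D := hCD (Set.mem_image2_of_mem hp₀ hq₀)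
        obtain ⟨p, q, rfl, hrp, hrq⟩ := reach_par_inv (hD _ hs0 t ht)
        obtain ⟨p', q', heq, hrp', hrq'⟩ := reach_par_inv (hD _ ht _ hs0)
        obtain ⟨e1, e2⟩ := PExpr.par.inj heq.symm
        subst e1; subst e2
        exact Set.mem_image2_of_mem (scc_mem h1 hp₀ hrp hrp')
          (scc_mem h2 hq₀ hrq hrq')
  · intro h1 h2
    rw [← not_and_or, not_iff_not]
    constructor
    · rintro ⟨s, hs, hns⟩
      obtain ⟨p₀, hp₀⟩ := scc_nonempty h1
      obtain ⟨q₀, hq₀⟩ := scc_nonempty h2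
      have hmem : PExpr.par p₀ q₀ ∈ ({s} : Set (PExpr Act)) := by
        rw [← hs]; exact Set.mem_image2_of_mem hp₀ hq₀
      rw [Set.mem_singleton_iff] at hmem
      subst hmem
      constructor
      · refine ⟨p₀, ?_, ?_⟩
        · apply Set.eq_singleton_iff_unique_mem.mpr
          refine ⟨hp₀, fun x hx => ?_⟩
          have : PExpr.par x q₀ ∈ ({PExpr.par p₀ q₀} : Set (PExpr Act)) := by
            rw [← hs]; exact Set.mem_image2_of_mem hx hq₀
          rw [Set.mem_singleton_iff] at this
          exact (PExpr.par.inj this).1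
        · rintro ⟨a, hstep⟩
          exact hns ⟨a, PStep.parl hstep⟩
      · refine ⟨q₀, ?_, ?_⟩
        · apply Set.eq_singleton_iff_unique_mem.mpr
          refine ⟨hq₀, fun x hx => ?_⟩
          have : PExpr.par p₀ x ∈ ({PExpr.par p₀ q₀} : Set (PExpr Act)) := by
            rw [← hs]; exact Set.mem_image2_of_mem hp₀ hx
          rw [Set.mem_singleton_iff] at this
          exact (PExpr.par.inj this).2
        · rintro ⟨a, hstep⟩
          exact hns ⟨a, PStep.parr hstep⟩
    · rintro ⟨⟨p, rfl, hnp⟩, ⟨q, rfl, hnq⟩⟩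
      refine ⟨PExpr.par p q, ?_, ?_⟩
      · ext x
        simp only [parSet, Set.mem_image2, Set.mem_singleton_iff]
        constructor
        · rintro ⟨a, rfl, b, rfl, rfl⟩; rfl
        · rintro rfl; exact ⟨p, rfl, q, rfl, rfl⟩
      · rintro ⟨a, hstep⟩
        rcases step_par_inv hstep with ⟨p', hs, heq⟩ | ⟨q', hs, heq⟩
        · obtain ⟨e1, _⟩ := PExpr.par.inj heq
          subst e1; exact hnp ⟨a, hs⟩
        · obtain ⟨_, e2⟩ := PExpr.par.inj heq
          subst e2; exact hnq ⟨a, hs⟩
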